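/- Let X be a finite nonempty type with n := Fintype.card X, and let Equiv.Perm X act on X × Set X by π • (w, S) = (π w, π '' S). For b : Bool and k : ℕ with k ≤ n - 1, define O(b,k) := {(w,S) | ((w ∈ S) ↔ b = true) ∧ (S \ {w}).ncard = k}. Then the 2n sets O(b,k) are nonempty, pairwise disjoint, their union is all of X × Set X, and each O(b,k) is exactly one orbit of the action. (O(false,0) is the prime orbit Vv₀, O(true,0) is Dd₀, and for 1 ≤ k ≤ n-1, O(false,k) is Dc_k and O(true,k) is Dw_k.) -/

import Mathlib

/-- The action of prime substitutions on level-1 minterms `(w, S)`: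
`π • (w, S) = (π w, π '' S)`. -/
instance permProdSMul {X : Type*} : SMul (Equiv.Perm X) (X × Set X) :=
  ⟨fun π p => (π p.1, π '' p.2)⟩

instance permProdAction {X : Type*} : MulAction (Equiv.Perm X) (X × Set X) where
  one_smul p := by
    show ((1 : Equiv.Perm X) p.1, ⇑(1 : Equiv.Perm X) '' p.2) = p
    simp
  mul_smul π π' p := by
    show ((π * π') p.1, ⇑(π * π') '' p.2) = (π (π' p.1), ⇑π '' (⇑π' '' p.2))
    simp [Set.image_image]


/-- The set `O(b,k)` of level-1 minterms `(w,S)` with `(w ∈ S ↔ b)` and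
`(S \ {w}).ncard = k`: for `b = false` these are the prime orbits `Vv₀` (k = 0)
and `Dc_k` (k ≥ 1); for `b = true` they are `Dd₀` (k = 0) and `Dw_k` (k ≥ 1). -/
def orbSet {X : Type*} (b : Bool) (k : ℕ) : Set (X × Set X) :=
  {p | (p.1 ∈ p.2 ↔ b = true) ∧ (p.2 \ {p.1}).ncard = k}

open Set in
private lemma exists_perm_aux {X : Type*} [Fintype X] {w w' : X} {S S' : Set X}
    (hb : w ∈ S ↔ w' ∈ S') (hk : (S \ {w}).ncard = (S' \ {w'}).ncard) :
    ∃ π : Equiv.Perm X, π w = w' ∧ π '' S = S' := by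
  classical
  have hfin : ∀ T : Set X, T.Finite := fun T => T.toFinite
  have hcard : Fintype.card ↥(S \ {w}) = Fintype.card ↥(S' \ {w'}) := by
    rw [← Nat.card_eq_fintype_card, ← Nat.card_eq_fintype_card,
      Nat.card_coe_set_eq, Nat.card_coe_set_eq, hk]
  let e : ↥(S \ {w}) ≃ ↥(S' \ {w'}) := Fintype.equivOfCardEq hcard
  let π₁ : Equiv.Perm X := e.extendSubtype
  have himg : π₁ '' (S \ {w}) = S' \ {w'} := by
    apply Set.eq_of_subset_of_ncard_le
    · rintro y ⟨x, hx, rfl⟩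
      exact e.extendSubtype_mem x hx
    · rw [Set.ncard_image_of_injective _ π₁.injective, hk]
    · exact hfin _
  have hw₁ : π₁ w ∉ S' \ {w'} := by
    rw [← himg]
    rintro ⟨x, hx, hxe⟩
    have := π₁.injective hxe
    subst this
    exact hx.2 rfl
  have hw' : w' ∉ S' \ {w'} := fun h => h.2 rfl
  refine ⟨Equiv.swap (π₁ w) w' * π₁, ?_, ?_⟩
  · simp [Equiv.swap_apply_left]
  · have hfix : ∀ y ∈ S' \ {w'}, Equiv.swap (π₁ w) w' y = y := fun y hy =>
      Equiv.swap_apply_of_ne_of_ne (fun h => hw₁ (h ▸ hy)) (fun h => hw' (h ▸ hy))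
    have himg2 : (Equiv.swap (π₁ w) w' * π₁) '' (S \ {w}) = S' \ {w'} := by
      rw [Equiv.Perm.coe_mul, Set.image_comp, himg]
      ext y
      constructor
      · rintro ⟨x, hx, rfl⟩; rw [hfix x hx]; exact hx
      · intro hy; exact ⟨y, hy, hfix y hy⟩
    by_cases hw : w ∈ S
    · have hw'' : w' ∈ S' := hb.mp hw
      have : S = insert w (S \ {w}) := by
        rw [Set.insert_diff_singleton, Set.insert_eq_of_mem hw]
      rw [this, Set.image_insert_eq, himg2]
      have : (Equiv.swap (π₁ w) w' * π₁) w = w' := by simp [Equiv.swap_apply_left]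
      rw [this, Set.insert_diff_singleton, Set.insert_eq_of_mem hw'']
    · have hw'' : w' ∉ S' := fun h => hw (hb.mpr h)
      rw [Set.diff_singleton_eq_self hw] at himg2
      rw [Set.diff_singleton_eq_self hw''] at himg2
      exact himg2

private lemma smul_def' {X : Type*} (π : Equiv.Perm X) (p : X × Set X) :
    π • p = (π p.1, π '' p.2) := rfl

private lemma orbSet_invariant {X : Type*} {b : Bool} {k : ℕ} {p : X × Set X}
    (hp : p ∈ orbSet (X := X) b k) (π : Equiv.Perm X) : π • p ∈ orbSet (X := X) b k := by
  obtain ⟨h1, h2⟩ := hp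
  rw [smul_def']
  constructor
  · simpa [π.injective.mem_set_image] using h1
  · have : (π '' p.2) \ {π p.1} = π '' (p.2 \ {p.1}) := by
      rw [← Set.image_singleton, ← Set.image_diff π.injective]
    rw [this, Set.ncard_image_of_injective _ π.injective, h2]

theorem orbSet_partition_and_orbits {X : Type*} [Fintype X] [Nonempty X] :
    (∀ (b : Bool) (k : ℕ), k ≤ Fintype.card X - 1 → (orbSet (X := X) b k).Nonempty) ∧
    (∀ (b b' : Bool) (k k' : ℕ), k ≤ Fintype.card X - 1 → k' ≤ Fintype.card X - 1 →
      (b, k) ≠ (b', k') → Disjoint (orbSet (X := X) b k) (orbSet (X := X) b' k')) ∧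
    (⋃ (b : Bool), ⋃ (k : ℕ), ⋃ (_ : k ≤ Fintype.card X - 1), orbSet (X := X) b k)
      = Set.univ ∧
    (∀ (b : Bool) (k : ℕ), k ≤ Fintype.card X - 1 →
      ∀ p ∈ orbSet (X := X) b k, orbSet (X := X) b k = MulAction.orbit (Equiv.Perm X) p) := by
  classical
  refine ⟨?_, ?_, ?_, ?_⟩
  · intro b k hk
    obtain ⟨w⟩ := ‹Nonempty X›
    have hce : ({w} : Set X)ᶜ = Set.univ \ {w} := by ext x; simp
    have hcompl : ({w} : Set X)ᶜ.ncard = Fintype.card X - 1 := by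
      rw [hce, Set.ncard_diff_singleton_of_mem (Set.mem_univ w),
        Set.ncard_univ, Nat.card_eq_fintype_card]
    obtain ⟨t, ht, htk⟩ := Set.exists_subset_card_eq (s := ({w} : Set X)ᶜ) (n := k) (by rw [hcompl]; exact hk)
    have hwt : w ∉ t := fun h => (ht h) rfl
    cases b with
    | false =>
      refine ⟨(w, t), ⟨by simp [orbSet, hwt], ?_⟩⟩
      rw [Set.diff_singleton_eq_self hwt]
      exact htk
    | true =>
      refine ⟨(w, insert w t), ⟨by simp [orbSet], ?_⟩⟩
      show ((insert w t) \ {w}).ncard = k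
      rw [Set.insert_sdiff_self_of_notMem hwt]
      exact htk
  · intro b b' k k' _ _ hne
    rw [Set.disjoint_left]
    rintro p ⟨h1, h2⟩ ⟨h1', h2'⟩
    apply hne
    have hb : b = b' := by
      cases b <;> cases b' <;> simp_all
    exact Prod.ext hb (h2 ▸ h2')
  · ext p
    simp only [Set.mem_iUnion, Set.mem_univ, iff_true]
    have hkle : (p.2 \ {p.1}).ncard ≤ Fintype.card X - 1 := by
      have hsub : p.2 \ {p.1} ⊆ Set.univ \ {p.1} := Set.diff_subset_diff_left (Set.subset_univ _)
      calc (p.2 \ {p.1}).ncard ≤ (Set.univ \ {p.1}).ncard :=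
            Set.ncard_le_ncard hsub (Set.toFinite _)
        _ = Fintype.card X - 1 := by
            rw [Set.ncard_diff_singleton_of_mem (Set.mem_univ _), Set.ncard_univ,
              Nat.card_eq_fintype_card]
    by_cases h : p.1 ∈ p.2
    · exact ⟨true, _, hkle, ⟨by simp [h], rfl⟩⟩
    · exact ⟨false, _, hkle, ⟨by simp [h], rfl⟩⟩
  · intro b k _ p hp
    ext q
    constructor
    · intro hq
      obtain ⟨π, hπw, hπS⟩ := exists_perm_aux (w := p.1) (w' := q.1) (S := p.2) (S' := q.2)
        (hp.1.trans hq.1.symm) (hp.2.trans hq.2.symm)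
      exact ⟨π, by show π • p = q; rw [smul_def', hπw, hπS]⟩
    · rintro ⟨π, rfl⟩
      exact orbSet_invariant hp π
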